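/- arXiv:2512.02286 — 3 statements merged into one kernel-verified Lean document; each statement's English description precedes it below -/
import Mathlib

section
/- Determinantal sign-decomposition of a product of two antisymmetrizations: for arbitrary functions f_1 of M variables and f_2 of N-M variables, and any variables w_1,...,w_N, ∑_{σ ∈ S_N} sgn(σ) f_1(w_{σ(1)},...,w_{σ(M)}) f_2(w_{σ(M+1)},...,w_{σ(N)}) = (-1)^{binom(N+1,2)+binom(M+1,2)} ∑_{T ⊆ {1,...,N}, |T| = N-M} (-1)^{∑_{i} T_i} [∑_{ρ ∈ S_M} sgn(ρ) f_1(w_{T^c_{ρ(1)}},...,w_{T^c_{ρ(M)}})]·[∑_{τ ∈ S_{N-M}} sgn(τ) f_2(w_{T_{τ(1)}},...,w_{T_{τ(N-M)}})], where T^c is the complement of T and T_i denotes the i-th smallest element of T. -/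
open Equiv Finset

namespace AntisymDecomp

variable {N M : ℕ}

def piFun (hM : M ≤ N) (T : Finset (Fin N)) (h1 : T.card = N - M) (h2 : Tᶜ.card = M)
    (x : Fin N) : Fin N :=
  if h : (x : ℕ) < M then Tᶜ.orderEmbOfFin h2 ⟨x, h⟩
  else T.orderEmbOfFin h1 ⟨(x : ℕ) - M, by have := x.isLt; omega⟩

lemma piFun_injective (hM : M ≤ N) (T : Finset (Fin N)) (h1 : T.card = N - M)
    (h2 : Tᶜ.card = M) : Function.Injective (piFun hM T h1 h2) := by
  intro x y hxy
  unfold piFun at hxy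
  split_ifs at hxy with hx hy hy
  · have := (Tᶜ.orderEmbOfFin h2).injective hxy
    have := congrArg Fin.val this
    exact Fin.ext (by simpa using this)
  · exfalso
    have m1 := Finset.orderEmbOfFin_mem Tᶜ h2 ⟨x, hx⟩
    rw [hxy] at m1
    exact (Finset.mem_compl.1 m1) (Finset.orderEmbOfFin_mem T h1 _)
  · exfalso
    have m1 := Finset.orderEmbOfFin_mem Tᶜ h2 ⟨y, hy⟩
    rw [← hxy] at m1
    exact (Finset.mem_compl.1 m1) (Finset.orderEmbOfFin_mem T h1 _)
  · have := (T.orderEmbOfFin h1).injective hxy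
    have := congrArg Fin.val this
    have hx' := x.isLt
    have hy' := y.isLt
    exact Fin.ext (by simp at this; omega)

noncomputable def pi (hM : M ≤ N) (T : Finset (Fin N)) (h1 : T.card = N - M) (h2 : Tᶜ.card = M) :
    Equiv.Perm (Fin N) :=
  Equiv.ofBijective _ (Finite.injective_iff_bijective.1 (piFun_injective hM T h1 h2))

lemma pi_apply_lt (hM : M ≤ N) (T : Finset (Fin N)) (h1 : T.card = N - M) (h2 : Tᶜ.card = M)
    {x : Fin N} (h : (x : ℕ) < M) : pi hM T h1 h2 x = Tᶜ.orderEmbOfFin h2 ⟨x, h⟩ := by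
  simp [pi, piFun, h]

lemma pi_apply_ge (hM : M ≤ N) (T : Finset (Fin N)) (h1 : T.card = N - M) (h2 : Tᶜ.card = M)
    {x : Fin N} (h : M ≤ (x : ℕ)) :
    pi hM T h1 h2 x = T.orderEmbOfFin h1 ⟨(x : ℕ) - M, by have := x.isLt; omega⟩ := by
  simp [pi, piFun, Nat.not_lt.2 h]

lemma pi_apply_castLE (hM : M ≤ N) (T : Finset (Fin N)) (h1 : T.card = N - M)
    (h2 : Tᶜ.card = M) (i : Fin M) (hi : (i : ℕ) < N) :
    pi hM T h1 h2 ⟨i, hi⟩ = Tᶜ.orderEmbOfFin h2 i := by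
  rw [pi_apply_lt hM T h1 h2 (by exact i.isLt)]

lemma pi_apply_natAdd (hM : M ≤ N) (T : Finset (Fin N)) (h1 : T.card = N - M)
    (h2 : Tᶜ.card = M) (j : Fin (N - M)) (hj : M + (j : ℕ) < N) :
    pi hM T h1 h2 ⟨M + j, hj⟩ = T.orderEmbOfFin h1 j := by
  rw [pi_apply_ge hM T h1 h2 (by simp)]
  congr 1
  exact Fin.ext (by simp)


lemma compl_insert_step {T : Finset (Fin N)} {t t' : Fin N} (ht : t ∈ T) (ht' : t' ∉ T)
    (hne : t ≠ t') :
    (insert t' (T.erase t))ᶜ = insert t (Tᶜ.erase t') := by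
  ext x
  by_cases hx : x = t <;> by_cases hx' : x = t' <;>
    simp_all [Finset.mem_compl, Finset.mem_insert, Finset.mem_erase]

lemma sign_pi (hM : M ≤ N) (T : Finset (Fin N)) (h1 : T.card = N - M) (h2 : Tᶜ.card = M) :
    Equiv.Perm.sign (pi hM T h1 h2)
      = (-1) ^ (M * (N - M) + (N - M).choose 2 + ∑ t ∈ T, (t : ℕ)) := by
  suffices H : ∀ d (T : Finset (Fin N)) (h1 : T.card = N - M) (h2 : Tᶜ.card = M),
      N * (N - M) - (∑ t ∈ T, (t : ℕ)) = d →
      Equiv.Perm.sign (pi hM T h1 h2)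
        = (-1) ^ (M * (N - M) + (N - M).choose 2 + ∑ t ∈ T, (t : ℕ)) from
    H _ T h1 h2 rfl
  intro d
  induction d using Nat.strong_induction_on with
  | _ d IH =>
  intro T h1 h2 hd
  by_cases hex : ∃ t ∈ T, ∃ h : (t : ℕ) + 1 < N, (⟨(t : ℕ) + 1, h⟩ : Fin N) ∉ T
  · obtain ⟨t, ht, htN, htm⟩ := hex
    set t' : Fin N := ⟨(t : ℕ) + 1, htN⟩ with ht'def
    have hne : t ≠ t' := by
      intro h; have := congrArg Fin.val h; simp [ht'def] at this
    have ht'e : t' ∉ T.erase t := fun h => htm (Finset.mem_of_mem_erase h)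
    set T' := insert t' (T.erase t) with hT'
    have hcardpos : 0 < T.card := Finset.card_pos.mpr ⟨t, ht⟩
    have h1' : T'.card = N - M := by
      rw [hT', Finset.card_insert_of_notMem ht'e, Finset.card_erase_of_mem ht, h1]
      omega
    have hcompl : T'ᶜ = insert t (Tᶜ.erase t') := compl_insert_step ht htm hne
    have ht'c : t' ∈ Tᶜ := Finset.mem_compl.mpr htm
    have htc : t ∉ Tᶜ.erase t' := fun h => (Finset.mem_compl.1 (Finset.mem_of_mem_erase h)) ht
    have hccardpos : 0 < Tᶜ.card := Finset.card_pos.mpr ⟨t', ht'c⟩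
    have h2' : T'ᶜ.card = M := by
      rw [hcompl, Finset.card_insert_of_notMem htc, Finset.card_erase_of_mem ht'c, h2]
      omega
    -- enumeration of T'
    have hembT : ∀ j, T'.orderEmbOfFin h1' j = Equiv.swap t t' (T.orderEmbOfFin h1 j) := by
      have hmem : ∀ j, Equiv.swap t t' (T.orderEmbOfFin h1 j) ∈ T' := by
        intro j
        set a := T.orderEmbOfFin h1 j with ha
        have haT : a ∈ T := Finset.orderEmbOfFin_mem T h1 j
        by_cases hat : a = t
        · rw [hat, Equiv.swap_apply_left]; exact Finset.mem_insert_self _ _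
        · have hat' : a ≠ t' := fun h => htm (h ▸ haT)
          rw [Equiv.swap_apply_of_ne_of_ne hat hat']
          exact Finset.mem_insert_of_mem (Finset.mem_erase.mpr ⟨hat, haT⟩)
      have hmono : StrictMono fun j => Equiv.swap t t' (T.orderEmbOfFin h1 j) := by
        intro j j' hjj
        have hab : T.orderEmbOfFin h1 j < T.orderEmbOfFin h1 j' :=
          (T.orderEmbOfFin h1).strictMono hjj
        set a := T.orderEmbOfFin h1 j
        set b := T.orderEmbOfFin h1 j'
        have haT : a ∈ T := Finset.orderEmbOfFin_mem T h1 j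
        have hbT : b ∈ T := Finset.orderEmbOfFin_mem T h1 j'
        have hat' : a ≠ t' := fun h => htm (h ▸ haT)
        have hbt' : b ≠ t' := fun h => htm (h ▸ hbT)
        have hvab : (a : ℕ) < (b : ℕ) := hab
        show Equiv.swap t t' a < Equiv.swap t t' b
        by_cases hat : a = t
        · have hbt : b ≠ t := fun h => absurd (h ▸ hab) (by simp [hat])
          rw [hat, Equiv.swap_apply_left, Equiv.swap_apply_of_ne_of_ne hbt hbt']
          have : (t : ℕ) < (b : ℕ) := hat ▸ hvab
          have hbne : (b : ℕ) ≠ (t : ℕ) + 1 := fun h => hbt' (Fin.ext (by simp [ht'def, h]))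
          simp only [Fin.lt_def, ht'def]
          omega
        · by_cases hbt : b = t
          · rw [hbt, Equiv.swap_apply_left, Equiv.swap_apply_of_ne_of_ne hat hat']
            have : (a : ℕ) < (t : ℕ) := hbt ▸ hvab
            simp only [Fin.lt_def, ht'def]
            omega
          · rw [Equiv.swap_apply_of_ne_of_ne hat hat', Equiv.swap_apply_of_ne_of_ne hbt hbt']
            exact hab
      exact fun j => (congrFun (Finset.orderEmbOfFin_unique h1' hmem hmono) j).symm
    -- enumeration of T'ᶜ
    have hembTc : ∀ i, T'ᶜ.orderEmbOfFin h2' i = Equiv.swap t t' (Tᶜ.orderEmbOfFin h2 i) := by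
      have hmem : ∀ i, Equiv.swap t t' (Tᶜ.orderEmbOfFin h2 i) ∈ T'ᶜ := by
        intro i
        set a := Tᶜ.orderEmbOfFin h2 i with ha
        have haC : a ∈ Tᶜ := Finset.orderEmbOfFin_mem Tᶜ h2 i
        have hat : a ≠ t := fun h => (Finset.mem_compl.1 (h ▸ haC)) ht
        rw [hcompl]
        by_cases hat' : a = t'
        · rw [hat', Equiv.swap_apply_right]; exact Finset.mem_insert_self _ _
        · rw [Equiv.swap_apply_of_ne_of_ne hat hat']
          exact Finset.mem_insert_of_mem (Finset.mem_erase.mpr ⟨hat', haC⟩)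
      have hmono : StrictMono fun i => Equiv.swap t t' (Tᶜ.orderEmbOfFin h2 i) := by
        intro i i' hii
        have hab : Tᶜ.orderEmbOfFin h2 i < Tᶜ.orderEmbOfFin h2 i' :=
          (Tᶜ.orderEmbOfFin h2).strictMono hii
        set a := Tᶜ.orderEmbOfFin h2 i
        set b := Tᶜ.orderEmbOfFin h2 i'
        have haC : a ∈ Tᶜ := Finset.orderEmbOfFin_mem Tᶜ h2 i
        have hbC : b ∈ Tᶜ := Finset.orderEmbOfFin_mem Tᶜ h2 i'
        have hat : a ≠ t := fun h => (Finset.mem_compl.1 (h ▸ haC)) ht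
        have hbt : b ≠ t := fun h => (Finset.mem_compl.1 (h ▸ hbC)) ht
        have hvab : (a : ℕ) < (b : ℕ) := hab
        show Equiv.swap t t' a < Equiv.swap t t' b
        by_cases hat' : a = t'
        · have hbt' : b ≠ t' := fun h => absurd (h ▸ hab) (by simp [hat'])
          rw [hat', Equiv.swap_apply_right, Equiv.swap_apply_of_ne_of_ne hbt hbt']
          have : ((t' : Fin N) : ℕ) < (b : ℕ) := hat' ▸ hvab
          simp only [Fin.lt_def, ht'def] at this ⊢
          omega
        · by_cases hbt' : b = t'
          · rw [hbt', Equiv.swap_apply_right, Equiv.swap_apply_of_ne_of_ne hat hat']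
            have h1v : (a : ℕ) < ((t' : Fin N) : ℕ) := hbt' ▸ hvab
            have h2v : (a : ℕ) ≠ (t : ℕ) := fun h => hat (Fin.ext h)
            simp only [Fin.lt_def, ht'def] at h1v ⊢
            omega
          · rw [Equiv.swap_apply_of_ne_of_ne hat hat', Equiv.swap_apply_of_ne_of_ne hbt hbt']
            exact hab
      exact fun i => (congrFun (Finset.orderEmbOfFin_unique h2' hmem hmono) i).symm
    have hpi : pi hM T' h1' h2' = Equiv.swap t t' * pi hM T h1 h2 := by
      ext x
      rcases lt_or_ge (x : ℕ) M with hx | hx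
      · rw [Equiv.Perm.mul_apply, pi_apply_lt hM T' h1' h2' hx, pi_apply_lt hM T h1 h2 hx,
          hembTc]
      · rw [Equiv.Perm.mul_apply, pi_apply_ge hM T' h1' h2' hx, pi_apply_ge hM T h1 h2 hx,
          hembT]
    have hsum : ∑ u ∈ T', (u : ℕ) = (∑ u ∈ T, (u : ℕ)) + 1 := by
      have e1 : ∑ u ∈ T.erase t, (u : ℕ) + (t : ℕ) = ∑ u ∈ T, (u : ℕ) :=
        Finset.sum_erase_add _ _ ht
      rw [hT', Finset.sum_insert ht'e]
      simp only [ht'def]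
      omega
    have hlt : ∑ u ∈ T, (u : ℕ) < N * (N - M) := by
      have hb : ∑ u ∈ T, (u : ℕ) ≤ T.card • (N - 1) :=
        Finset.sum_le_card_nsmul _ _ _ (fun x _ => by have := x.isLt; omega)
      rw [h1, smul_eq_mul] at hb
      have hK : 0 < N - M := by omega
      have hN : 0 < N := by omega
      calc ∑ u ∈ T, (u : ℕ) ≤ (N - M) * (N - 1) := hb
        _ < (N - M) * N := by
            exact mul_lt_mul_of_pos_left (by omega) hK
        _ = N * (N - M) := Nat.mul_comm _ _
    have hd0 : 0 < d := by omega
    have hIH := IH (d - 1) (by omega) T' h1' h2' (by omega)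
    rw [hpi, map_mul, Equiv.Perm.sign_swap hne, hsum] at hIH
    have : (M * (N - M) + (N - M).choose 2 + ((∑ u ∈ T, (u : ℕ)) + 1))
        = (M * (N - M) + (N - M).choose 2 + ∑ u ∈ T, (u : ℕ)) + 1 := by omega
    rw [this, pow_succ] at hIH
    apply mul_left_cancel (a := (-1 : ℤˣ))
    rw [hIH, mul_comm]
  · -- T is the top block
    push_neg at hex
    have hup : ∀ t ∈ T, ∀ u : Fin N, t ≤ u → u ∈ T := by
      intro t ht u htu
      have htu' : (t : ℕ) ≤ (u : ℕ) := htu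
      obtain ⟨m, hm⟩ : ∃ m, (u : ℕ) = (t : ℕ) + m := ⟨(u : ℕ) - (t : ℕ), by omega⟩
      clear htu htu'
      induction m generalizing u with
      | zero => have : u = t := Fin.ext (by omega); rwa [this]
      | succ m ihm =>
        have hlt : (t : ℕ) + m < N := by have := u.isLt; omega
        have hprev : (⟨(t : ℕ) + m, hlt⟩ : Fin N) ∈ T := ihm ⟨(t : ℕ) + m, hlt⟩ rfl
        have hlt2 : (t : ℕ) + m + 1 < N := by have := u.isLt; omega
        have := hex ⟨(t : ℕ) + m, hlt⟩ hprev hlt2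
        have hu : u = (⟨(t : ℕ) + m + 1, hlt2⟩ : Fin N) := Fin.ext (by show (u : ℕ) = (t : ℕ) + m + 1; omega)
        rwa [hu]
    have hMle : ∀ t ∈ T, M ≤ (t : ℕ) := by
      intro t ht
      have hsub : Finset.Ici t ⊆ T := fun u hu => hup t ht u (Finset.mem_Ici.1 hu)
      have hcard := Finset.card_le_card hsub
      rw [Fin.card_Ici, h1] at hcard
      have := t.isLt; omega
    set g : Fin (N - M) → Fin N := fun j => ⟨M + j, by have := j.isLt; omega⟩ with hg
    have hginj : Function.Injective g := by
      intro a b hab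
      have := congrArg Fin.val hab
      simp only [hg] at this
      exact Fin.ext (by omega)
    have hF : T = Finset.image g Finset.univ := by
      apply Finset.eq_of_subset_of_card_le
      · intro x hx
        have hx1 := hMle x hx
        have hx2 := x.isLt
        refine Finset.mem_image.2 ⟨⟨(x : ℕ) - M, by omega⟩, Finset.mem_univ _, ?_⟩
        apply Fin.ext
        simp only [hg]
        omega
      · rw [Finset.card_image_of_injective _ hginj, Finset.card_univ, Fintype.card_fin, h1]
    have hembT : ∀ j, T.orderEmbOfFin h1 j = g j := by
      have hmem : ∀ j, g j ∈ T := fun j => by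
        rw [hF]; exact Finset.mem_image_of_mem _ (Finset.mem_univ _)
      have hmono : StrictMono g := by
        intro a b hab
        simp only [hg, Fin.lt_def]
        have : (a : ℕ) < (b : ℕ) := hab
        omega
      exact fun j => (congrFun (Finset.orderEmbOfFin_unique h1 hmem hmono) j).symm
    have hembTc : ∀ i : Fin M, Tᶜ.orderEmbOfFin h2 i = ⟨(i : ℕ), Nat.lt_of_lt_of_le i.isLt hM⟩ := by
      have hmem : ∀ i : Fin M, (⟨(i : ℕ), Nat.lt_of_lt_of_le i.isLt hM⟩ : Fin N) ∈ Tᶜ := by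
        intro i
        refine Finset.mem_compl.mpr ?_
        intro hmem
        rw [hF] at hmem
        obtain ⟨j, _, hj⟩ := Finset.mem_image.1 hmem
        have hj' : M + (j : ℕ) = (i : ℕ) := congrArg Fin.val hj
        have := i.isLt
        omega
      have hmono : StrictMono fun i : Fin M => (⟨(i : ℕ), Nat.lt_of_lt_of_le i.isLt hM⟩ : Fin N) := by
        intro a b hab
        show (⟨(a : ℕ), _⟩ : Fin N) < ⟨(b : ℕ), _⟩
        exact Fin.mk_lt_mk.mpr hab
      exact fun i => (congrFun (Finset.orderEmbOfFin_unique h2 hmem hmono) i).symm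
    have hpi1 : pi hM T h1 h2 = 1 := by
      ext x
      rcases lt_or_ge (x : ℕ) M with hx | hx
      · rw [pi_apply_lt hM T h1 h2 hx, hembTc]
        rfl
      · rw [pi_apply_ge hM T h1 h2 hx, hembT]
        simp only [hg, Equiv.Perm.coe_one, id_eq]
        omega
    rw [hpi1, map_one]
    have hsumT : ∑ u ∈ T, (u : ℕ) = M * (N - M) + ∑ j ∈ Finset.range (N - M), j := by
      rw [hF, Finset.sum_image (fun a _ b _ h => hginj h)]
      have hv : ∀ j : Fin (N - M), ((g j : Fin N) : ℕ) = M + (j : ℕ) := fun j => rfl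
      simp only [hv]
      rw [Finset.sum_add_distrib, Finset.sum_const, Finset.card_univ, Fintype.card_fin,
        smul_eq_mul, Fin.sum_univ_eq_sum_range (fun i => i) (N - M)]
      ring
    have hCS : (N - M).choose 2 = ∑ j ∈ Finset.range (N - M), j := by
      rw [Nat.choose_two_right, ← Finset.sum_range_id_mul_two (N - M),
        Nat.mul_div_cancel _ (by norm_num)]
    rw [hsumT, hCS]
    exact (Even.neg_one_pow ⟨M * (N - M) + ∑ j ∈ Finset.range (N - M), j, by ring⟩).symm

def sumEquiv (hM : M ≤ N) : Fin M ⊕ Fin (N - M) ≃ Fin N :=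
  finSumFinEquiv.trans (finCongr (by omega))

def bp (hM : M ≤ N) (ρ : Equiv.Perm (Fin M)) (τ : Equiv.Perm (Fin (N - M))) :
    Equiv.Perm (Fin N) :=
  (sumEquiv hM).permCongr (ρ.sumCongr τ)

lemma bp_apply_inl (hM : M ≤ N) (ρ : Equiv.Perm (Fin M)) (τ : Equiv.Perm (Fin (N - M)))
    (i : Fin M) : bp hM ρ τ (sumEquiv hM (Sum.inl i)) = sumEquiv hM (Sum.inl (ρ i)) := by
  simp [bp, Equiv.permCongr_apply]

lemma bp_apply_inr (hM : M ≤ N) (ρ : Equiv.Perm (Fin M)) (τ : Equiv.Perm (Fin (N - M)))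
    (j : Fin (N - M)) : bp hM ρ τ (sumEquiv hM (Sum.inr j)) = sumEquiv hM (Sum.inr (τ j)) := by
  simp [bp, Equiv.permCongr_apply]

lemma sign_bp (hM : M ≤ N) (ρ : Equiv.Perm (Fin M)) (τ : Equiv.Perm (Fin (N - M))) :
    Equiv.Perm.sign (bp hM ρ τ) = Equiv.Perm.sign ρ * Equiv.Perm.sign τ := by
  rw [bp, Equiv.Perm.sign_permCongr, Equiv.Perm.sign_sumCongr]

lemma Phi_apply_left (hM : M ≤ N) (T : Finset (Fin N)) (h1 : T.card = N - M) (h2 : Tᶜ.card = M)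
    (ρ : Equiv.Perm (Fin M)) (τ : Equiv.Perm (Fin (N - M))) (i : Fin M) :
    (pi hM T h1 h2 * bp hM ρ τ) ⟨(i : ℕ), Nat.lt_of_lt_of_le i.isLt hM⟩
      = Tᶜ.orderEmbOfFin h2 (ρ i) := by
  rw [Equiv.Perm.mul_apply]
  rw [show (⟨(i : ℕ), Nat.lt_of_lt_of_le i.isLt hM⟩ : Fin N) = sumEquiv hM (Sum.inl i) from rfl]
  rw [bp_apply_inl]
  rw [show sumEquiv hM (Sum.inl (ρ i))
      = (⟨((ρ i : Fin M) : ℕ), Nat.lt_of_lt_of_le (ρ i).isLt hM⟩ : Fin N) from rfl]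
  exact pi_apply_castLE hM T h1 h2 (ρ i) _

lemma Phi_apply_right (hM : M ≤ N) (T : Finset (Fin N)) (h1 : T.card = N - M) (h2 : Tᶜ.card = M)
    (ρ : Equiv.Perm (Fin M)) (τ : Equiv.Perm (Fin (N - M))) (j : Fin (N - M))
    (hj : M + (j : ℕ) < N) :
    (pi hM T h1 h2 * bp hM ρ τ) ⟨M + (j : ℕ), hj⟩ = T.orderEmbOfFin h1 (τ j) := by
  rw [Equiv.Perm.mul_apply]
  rw [show (⟨M + (j : ℕ), hj⟩ : Fin N) = sumEquiv hM (Sum.inr j) from rfl]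
  rw [bp_apply_inr]
  rw [show sumEquiv hM (Sum.inr (τ j))
      = (⟨M + ((τ j : Fin (N - M)) : ℕ), by have := (τ j).isLt; omega⟩ : Fin N) from rfl]
  exact pi_apply_natAdd hM T h1 h2 (τ j) _

lemma two_mul_choose_two (n : ℕ) : 2 * n.choose 2 = n * (n - 1) := by
  cases n with
  | zero => rfl
  | succ k =>
    rw [Nat.choose_two_right, Nat.succ_sub_one, Nat.mul_div_cancel']
    rw [Nat.mul_comm]
    exact (Nat.even_mul_succ_self k).two_dvd

lemma parity_lemma {R : Type*} [CommRing R] (N M : ℕ) (hM : M ≤ N) (s : ℕ) :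
    ((-1 : R)) ^ (M * (N - M) + (N - M).choose 2 + s)
      = (-1) ^ ((N + 1).choose 2 + (M + 1).choose 2) * (-1) ^ (s + (N - M)) := by
  rw [← pow_add, neg_one_pow_eq_pow_mod_two,
    neg_one_pow_eq_pow_mod_two (n := (N + 1).choose 2 + (M + 1).choose 2 + (s + (N - M)))]
  congr 1
  obtain ⟨K, rfl⟩ : ∃ K, N = M + K := ⟨N - M, by omega⟩
  simp only [Nat.add_sub_cancel_left]
  have h1 := two_mul_choose_two (M + K + 1)
  have h2 := two_mul_choose_two (M + 1)
  have h3 := two_mul_choose_two K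
  simp only [Nat.add_sub_cancel] at h1 h2
  have h4 : (M + K + 1) * (M + K) = (M + 1) * M + 2 * (M * K) + K * K + K := by ring
  have h5 : K * (K - 1) + K = K * K := by
    cases K with
    | zero => rfl
    | succ k => simp only [Nat.succ_sub_one]; ring
  generalize (M + K + 1) * (M + K) = pN at h1 h4
  generalize (M + 1) * M = pM at h2 h4
  generalize M * K = p1 at h4 ⊢
  generalize K * K = p2 at h4 h5
  generalize K * (K - 1) = p3 at h3 h5
  generalize (M + K + 1).choose 2 = cN at h1 ⊢
  generalize (M + 1).choose 2 = cM at h2 ⊢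
  generalize K.choose 2 = cK at h3 ⊢
  omega

lemma Phi_injective (hM : M ≤ N) :
    Function.Injective
      (fun x : {T : Finset (Fin N) // T.card = N - M ∧ Tᶜ.card = M} ×
          Equiv.Perm (Fin M) × Equiv.Perm (Fin (N - M)) =>
        pi hM x.1.1 x.1.2.1 x.1.2.2 * bp hM x.2.1 x.2.2) := by
  have hmemchar : ∀ (T : Finset (Fin N)) (hT : T.card = N - M) (hc : Tᶜ.card = M)
      (ρ : Equiv.Perm (Fin M)) (τ : Equiv.Perm (Fin (N - M))) (x : Fin N),
      x ∈ T ↔ ∃ j : Fin (N - M),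
        (pi hM T hT hc * bp hM ρ τ) ⟨M + (j : ℕ), by have := j.isLt; omega⟩ = x := by
    intro T hT hc ρ τ x
    constructor
    · intro hx
      have : x ∈ Set.range (T.orderEmbOfFin hT) := by
        rw [Finset.range_orderEmbOfFin]; exact hx
      obtain ⟨j0, hj0⟩ := this
      refine ⟨τ.symm j0, ?_⟩
      rw [Phi_apply_right hM T hT hc ρ τ (τ.symm j0) _, Equiv.apply_symm_apply]
      exact hj0
    · rintro ⟨j, rfl⟩
      rw [Phi_apply_right hM T hT hc ρ τ j _]
      exact Finset.orderEmbOfFin_mem T hT _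
  rintro ⟨⟨T1, hT1, hc1⟩, ρ1, τ1⟩ ⟨⟨T2, hT2, hc2⟩, ρ2, τ2⟩ h
  simp only at h
  have happ : ∀ x, (pi hM T1 hT1 hc1 * bp hM ρ1 τ1) x = (pi hM T2 hT2 hc2 * bp hM ρ2 τ2) x :=
    fun x => by rw [h]
  have hT12 : T1 = T2 := by
    ext x
    rw [hmemchar T1 hT1 hc1 ρ1 τ1 x, hmemchar T2 hT2 hc2 ρ2 τ2 x]
    exact exists_congr fun j => by rw [happ]
  subst hT12
  have hτ : τ1 = τ2 := by
    apply Equiv.ext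
    intro j
    apply (T1.orderEmbOfFin hT1).injective
    have e1 := Phi_apply_right hM T1 hT1 hc1 ρ1 τ1 j (by have := j.isLt; omega)
    have e2 := Phi_apply_right hM T1 hT2 hc2 ρ2 τ2 j (by have := j.isLt; omega)
    rw [← e1, ← e2]
    exact happ _
  have hρ : ρ1 = ρ2 := by
    apply Equiv.ext
    intro i
    apply (T1ᶜ.orderEmbOfFin hc1).injective
    have e1 := Phi_apply_left hM T1 hT1 hc1 ρ1 τ1 i
    have e2 := Phi_apply_left hM T1 hT2 hc2 ρ2 τ2 i
    rw [← e1, ← e2]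
    exact happ _
  simp [Prod.ext_iff, Subtype.ext_iff, hρ, hτ]

end AntisymDecomp


/-- determinantal sign-decomposition of a product of two antisymmetrizations:
`∑_{σ ∈ S_N} sgn(σ) f₁(w_{σ(1)},…,w_{σ(M)}) f₂(w_{σ(M+1)},…,w_{σ(N)})` equals
`(-1)^{C(N+1,2)+C(M+1,2)}` times the sum over subsets `T ⊆ {1,…,N}` of size `N-M`
of `(-1)^{∑ T_i}` times the antisymmetrization of `f₁` over the complement of `T`
(enumerated increasingly) times the antisymmetrization of `f₂` over `T`. -/
theorem antisymmetrization_decomposition {R : Type*} [CommRing R] (N M : ℕ) (hM : M ≤ N)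
    (f₁ : (Fin M → R) → R) (f₂ : (Fin (N - M) → R) → R) (w : Fin N → R) :
    ∑ σ : Equiv.Perm (Fin N), ((Equiv.Perm.sign σ : ℤ) : R) *
        (f₁ (fun i => w (σ (Fin.castLE hM i))) *
          f₂ (fun i => w (σ ⟨M + i.1, by have := i.2; omega⟩)))
      = (-1 : R) ^ ((N + 1).choose 2 + (M + 1).choose 2) *
          ∑ T : Finset (Fin N),
            (if h : T.card = N - M ∧ Tᶜ.card = M then
              ((-1 : R) ^ (∑ t ∈ T, (t.1 + 1))) *
                (∑ ρ : Equiv.Perm (Fin M), ((Equiv.Perm.sign ρ : ℤ) : R) *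
                  f₁ (fun i => w ((Tᶜ.orderIsoOfFin h.2 (ρ i)).1))) *
                (∑ τ : Equiv.Perm (Fin (N - M)), ((Equiv.Perm.sign τ : ℤ) : R) *
                  f₂ (fun i => w ((T.orderIsoOfFin h.1 (τ i)).1)))
            else 0) := by
  classical
  open AntisymDecomp Equiv Finset in
  set P : Finset (Fin N) → Prop := fun T => T.card = N - M ∧ Tᶜ.card = M with hP
  set body : Equiv.Perm (Fin N) → R := fun σ => ((Equiv.Perm.sign σ : ℤ) : R) *
        (f₁ (fun i => w (σ (Fin.castLE hM i))) *
          f₂ (fun i => w (σ ⟨M + i.1, by have := i.2; omega⟩))) with hbody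
  -- the bijection
  have hcardD : Fintype.card {T : Finset (Fin N) // P T} = N.choose (N - M) := by
    rw [Fintype.card_congr (Equiv.subtypeEquivRight (q := fun T : Finset (Fin N) =>
      T.card = N - M) (fun T => and_iff_left_of_imp (fun h => by
        rw [Finset.card_compl, Fintype.card_fin, h]; omega)))]
    rw [Fintype.card_finset_len, Fintype.card_fin]
  have hcard : Fintype.card ({T : Finset (Fin N) // P T} ×
        Equiv.Perm (Fin M) × Equiv.Perm (Fin (N - M)))
      = Fintype.card (Equiv.Perm (Fin N)) := by
    rw [Fintype.card_prod, Fintype.card_prod, Fintype.card_perm, Fintype.card_perm,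
      Fintype.card_perm, Fintype.card_fin, Fintype.card_fin, Fintype.card_fin, hcardD]
    have h := Nat.choose_mul_factorial_mul_factorial (show N - M ≤ N by omega)
    rw [Nat.sub_sub_self hM] at h
    rw [← h]; ring
  have hbij : Function.Bijective
      (fun x : {T : Finset (Fin N) // P T} × Equiv.Perm (Fin M) × Equiv.Perm (Fin (N - M)) =>
        pi hM x.1.1 x.1.2.1 x.1.2.2 * bp hM x.2.1 x.2.2) :=
    (Fintype.bijective_iff_injective_and_card _).mpr ⟨Phi_injective hM, hcard⟩
  rw [← Fintype.sum_bijective _ hbij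
    (fun x => body (pi hM x.1.1 x.1.2.1 x.1.2.2 * bp hM x.2.1 x.2.2)) body (fun x => rfl)]
  -- restructure RHS : sum over subtype
  have hdite : ∀ G : (T : Finset (Fin N)) → P T → R,
      ∑ T : Finset (Fin N), (if h : P T then G T h else 0)
        = ∑ T : {T : Finset (Fin N) // P T}, G T.1 T.2 := by
    intro G
    rw [← Finset.sum_filter_of_ne (p := P)
      (fun x _ hx => by by_contra hPx; exact hx (dif_neg hPx))]
    rw [Finset.sum_subtype (p := P) _ (fun x => by simp) (fun T => if h : P T then G T h else 0)]
    exact Finset.sum_congr rfl (fun x _ => dif_pos x.2)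
  rw [hdite, Finset.mul_sum, Fintype.sum_prod_type]
  apply Finset.sum_congr rfl
  rintro ⟨T, h1, h2⟩ -
  simp only
  -- per-T computation
  rw [Fintype.sum_prod_type]
  have hsum1 : ∑ t ∈ T, ((t : ℕ) + 1) = (∑ t ∈ T, (t : ℕ)) + (N - M) := by
    rw [Finset.sum_add_distrib, Finset.sum_const, h1, smul_eq_mul, mul_one]
  set E : ℕ := M * (N - M) + (N - M).choose 2 + ∑ t ∈ T, (t : ℕ) with hE
  have hcoef : ((-1 : R)) ^ E
      = (-1 : R) ^ ((N + 1).choose 2 + (M + 1).choose 2) * (-1) ^ (∑ t ∈ T, ((t : ℕ) + 1)) := by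
    rw [hsum1, hE]
    exact parity_lemma N M hM _
  calc
    ∑ ρ : Equiv.Perm (Fin M), ∑ τ : Equiv.Perm (Fin (N - M)),
        body (pi hM T h1 h2 * bp hM ρ τ)
      = ∑ ρ : Equiv.Perm (Fin M), ∑ τ : Equiv.Perm (Fin (N - M)),
          ((-1 : R) ^ E) *
            ((((Equiv.Perm.sign ρ : ℤ) : R) *
                f₁ (fun i => w ((Tᶜ.orderIsoOfFin h2 (ρ i)).1))) *
             (((Equiv.Perm.sign τ : ℤ) : R) *
                f₂ (fun i => w ((T.orderIsoOfFin h1 (τ i)).1)))) := by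
        apply Finset.sum_congr rfl; intro ρ _
        apply Finset.sum_congr rfl; intro τ _
        have hargs1 : (fun i => w ((pi hM T h1 h2 * bp hM ρ τ) (Fin.castLE hM i)))
            = fun i => w ((Tᶜ.orderIsoOfFin h2 (ρ i)).1) := by
          funext i
          rw [Finset.coe_orderIsoOfFin_apply]
          congr 1
          exact Phi_apply_left hM T h1 h2 ρ τ i
        have hargs2 : (fun i : Fin (N - M) =>
              w ((pi hM T h1 h2 * bp hM ρ τ) ⟨M + i.1, by have := i.2; omega⟩))
            = fun i => w ((T.orderIsoOfFin h1 (τ i)).1) := by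
          funext i
          rw [Finset.coe_orderIsoOfFin_apply]
          congr 1
          exact Phi_apply_right hM T h1 h2 ρ τ i _
        rw [hbody]
        simp only
        rw [hargs1, hargs2]
        rw [map_mul, sign_bp, sign_pi hM T h1 h2, ← hE]
        push_cast
        ring
    _ = ((-1 : R) ^ E) *
          ((∑ ρ : Equiv.Perm (Fin M), ((Equiv.Perm.sign ρ : ℤ) : R) *
              f₁ (fun i => w ((Tᶜ.orderIsoOfFin h2 (ρ i)).1))) *
           (∑ τ : Equiv.Perm (Fin (N - M)), ((Equiv.Perm.sign τ : ℤ) : R) *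
              f₂ (fun i => w ((T.orderIsoOfFin h1 (τ i)).1)))) := by
        rw [Finset.sum_mul_sum, Finset.mul_sum]
        apply Finset.sum_congr rfl; intro ρ _
        rw [Finset.mul_sum]
    _ = (-1 : R) ^ ((N + 1).choose 2 + (M + 1).choose 2) *
          ((-1 : R) ^ (∑ t ∈ T, ((t : ℕ) + 1)) *
            (∑ ρ : Equiv.Perm (Fin M), ((Equiv.Perm.sign ρ : ℤ) : R) *
              f₁ (fun i => w ((Tᶜ.orderIsoOfFin h2 (ρ i)).1))) *
            (∑ τ : Equiv.Perm (Fin (N - M)), ((Equiv.Perm.sign τ : ℤ) : R) *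
              f₂ (fun i => w ((T.orderIsoOfFin h1 (τ i)).1)))) := by
        rw [hcoef]; ring
end

section
/- Geometric-series recurrence for the contour kernel p: for the function p_k(x) = (1/2πi)∮_β w^{k-x} e^{t(w-1)} / ((w-α)(w-1)^k) dw, where β is a circle of radius R > 1 around the origin enclosing 1, α, the identity p_{k+1}(z) = ∑_{y ≥ z} p_k(y) holds for all integers z and k ≥ 1, the series converging absolutely. -/
open Complex

lemma sphere_facts {α R : ℝ} (hα0 : 0 < α) (hα1 : α < 1) (hR : 1 < R) {w : ℂ}
    (hw : ‖w‖ = R) : w ≠ 0 ∧ w - 1 ≠ 0 ∧ w - (α : ℂ) ≠ 0 ∧ ‖w⁻¹‖ < 1 := by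
  have h0 : w ≠ 0 := by
    intro h; rw [h] at hw; simp at hw; linarith
  refine ⟨h0, ?_, ?_, ?_⟩
  · intro h
    have : w = 1 := by linear_combination h
    rw [this] at hw; simp at hw; linarith
  · intro h
    have : w = (α : ℂ) := by linear_combination h
    rw [this] at hw; simp [abs_of_pos hα0] at hw; linarith
  · rw [norm_inv]
    have : ‖w‖ = R := hw
    rw [this, inv_lt_one_iff₀]; right; exact hR

lemma cont_aux (α t R : ℝ) (hα0 : 0 < α) (hα1 : α < 1) (hR : 1 < R) (m : ℤ) (j : ℕ) :
    Continuous fun θ : ℝ => (circleMap 0 R θ) ^ m * Complex.exp ((t:ℂ)*(circleMap 0 R θ - 1)) /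
      ((circleMap 0 R θ - (α:ℂ)) * (circleMap 0 R θ - 1) ^ j) := by
  have hc : Continuous (circleMap 0 R) := continuous_circleMap 0 R
  have hfacts : ∀ θ : ℝ, circleMap 0 R θ ≠ 0 ∧ circleMap 0 R θ - 1 ≠ 0 ∧
      circleMap 0 R θ - (α:ℂ) ≠ 0 := by
    intro θ
    have := sphere_facts hα0 hα1 hR (w := circleMap 0 R θ)
      (by rw [norm_circleMap_zero]; exact abs_of_pos (by linarith))
    exact ⟨this.1, this.2.1, this.2.2.1⟩
  apply Continuous.div
  · exact ((hc.zpow₀ m (fun θ => Or.inl (hfacts θ).1)).mul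
      (Complex.continuous_exp.comp (continuous_const.mul (hc.sub continuous_const))))
  · exact ((hc.sub continuous_const).mul ((hc.sub continuous_const).pow j))
  · intro θ
    exact mul_ne_zero (hfacts θ).2.2 (pow_ne_zero j (hfacts θ).2.1)

lemma pker_term_eq (α t : ℝ) (k : ℕ) (z : ℤ) (n : ℕ) (w : ℂ) (h0 : w ≠ 0) :
    w ^ ((k:ℤ) - (z + n)) * Complex.exp ((t:ℂ)*(w-1)) / ((w - (α:ℂ)) * (w-1)^k)
      = (w ^ ((k:ℤ) - z) * Complex.exp ((t:ℂ)*(w-1)) / ((w - (α:ℂ)) * (w-1)^k)) * (w⁻¹)^n := by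
  rw [show (k:ℤ) - (z + n) = ((k:ℤ) - z) + (-n) by ring, zpow_add₀ h0, zpow_neg, zpow_natCast,
    inv_pow]
  ring

lemma pker_hasSum_aux (α t R : ℝ) (hα0 : 0 < α) (hα1 : α < 1) (hR : 1 < R) (k : ℕ) (z : ℤ)
    (w : ℂ) (hw : ‖w‖ = R) :
    HasSum (fun n : ℕ => w ^ ((k:ℤ) - (z + n)) * Complex.exp ((t:ℂ)*(w-1)) /
        ((w - (α:ℂ)) * (w-1)^k))
      (w ^ (((k:ℕ)+1:ℤ) - z) * Complex.exp ((t:ℂ)*(w-1)) / ((w - (α:ℂ)) * (w-1)^(k+1))) := by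
  obtain ⟨h0, h1, hα, hinv⟩ := sphere_facts hα0 hα1 hR hw
  have hgeo := hasSum_geometric_of_norm_lt_one hinv
  rw [funext (pker_term_eq α t k z · w h0)]
  have := hgeo.mul_left (w ^ ((k:ℤ) - z) * Complex.exp ((t:ℂ)*(w-1)) / ((w - (α:ℂ)) * (w-1)^k))
  convert this using 1
  · rfl
  have h1w : (1 : ℂ) - w⁻¹ = (w - 1) / w := by field_simp
  rw [h1w, show ((k:ℕ)+1:ℤ) - z = ((k:ℤ) - z) + 1 by ring, zpow_add_one₀ h0, pow_succ]
  field_simp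

/-- The contour kernel `p_k(x) = (1/2πi) ∮_{|w|=R} w^{k-x} e^{t(w-1)}/((w-α)(w-1)^k) dw`. -/
noncomputable def pker (α t R : ℝ) (k : ℕ) (x : ℤ) : ℂ :=
  (2 * Real.pi * Complex.I)⁻¹ *
    ∮ w in C(0, R), w ^ ((k : ℤ) - x) * Complex.exp ((t : ℂ) * (w - 1)) /
      ((w - (α : ℂ)) * (w - 1) ^ k)

set_option maxHeartbeats 1000000 in
/-- geometric-series recurrence `p_{k+1}(z) = ∑_{y ≥ z} p_k(y)`, the series
converging absolutely; here the circle has radius `R > 1` and encloses `1` and `α`. -/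
theorem pker_recurrence (α t R : ℝ) (hα0 : 0 < α) (hα1 : α < 1) (hR : 1 < R)
    (k : ℕ) (hk : 1 ≤ k) (z : ℤ) :
    Summable (fun n : ℕ => ‖pker α t R k (z + n)‖) ∧
      ∑' n : ℕ, pker α t R k (z + n) = pker α t R (k + 1) z := by
  have hR0 : (0:ℝ) < R := by linarith
  set G : ℝ → ℂ := fun θ => (circleMap 0 R θ) ^ ((k:ℤ)-z) *
    Complex.exp ((t:ℂ)*(circleMap 0 R θ - 1)) /
    ((circleMap 0 R θ - (α:ℂ)) * (circleMap 0 R θ - 1)^k) with hG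
  have hGc : Continuous G := cont_aux α t R hα0 hα1 hR ((k:ℤ)-z) k
  obtain ⟨θ₀, -, hMB⟩ := (isCompact_Icc (a := (0:ℝ)) (b := 2*Real.pi)).exists_isMaxOn
    ⟨0, by constructor <;> [rfl; positivity]⟩ hGc.norm.continuousOn
  set M := ‖G θ₀‖ with hMdef
  have hM0 : 0 ≤ M := norm_nonneg _
  have hGper : ∀ θ : ℝ, ‖G θ‖ ≤ M := by
    intro θ
    obtain ⟨θ', hθ', hEq⟩ := (periodic_circleMap 0 R).exists_mem_Ico₀ (by positivity) θ
    have : G θ = G θ' := by simp only [hG, hEq]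
    rw [this]
    exact hMB ⟨hθ'.1, hθ'.2.le⟩
  -- circleMap facts
  have hwmem : ∀ w : ℂ, w ∈ Metric.sphere (0:ℂ) R → ‖w‖ = R := by
    intro w hw; simpa using hw
  -- bound on sphere for each n
  have key : ∀ n : ℕ, ∀ w ∈ Metric.sphere (0:ℂ) R,
      ‖w ^ ((k:ℤ) - (z + n)) * Complex.exp ((t:ℂ)*(w-1)) / ((w - (α:ℂ)) * (w-1)^k)‖
        ≤ M * R⁻¹ ^ n := by
    intro n w hw
    have hwR := hwmem w hw
    obtain ⟨h0, -, -, -⟩ := sphere_facts hα0 hα1 hR hwR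
    obtain ⟨θ, rfl⟩ : ∃ θ, circleMap 0 R θ = w := by
      have : w ∈ Set.range (circleMap 0 R) := by
        rw [range_circleMap]
        simpa [abs_of_pos hR0] using hw
      exact this
    rw [pker_term_eq α t k z n _ h0, norm_mul, norm_pow, norm_inv]
    have hnw : ‖circleMap 0 R θ‖ = R := hwR
    rw [hnw]
    exact mul_le_mul_of_nonneg_right (hGper θ) (by positivity)
  have hRinv1 : R⁻¹ < 1 := by rw [inv_lt_one_iff₀]; right; exact hR
  have hgeo_sum : Summable (fun n : ℕ => M * R⁻¹ ^ n) :=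
    (summable_geometric_of_lt_one (by positivity) hRinv1).mul_left M
  -- HasSum of the circle integrals
  have hint : HasSum
      (fun n : ℕ => ∮ w in C(0, R), w ^ ((k:ℤ) - (z + n)) * Complex.exp ((t:ℂ)*(w-1)) /
        ((w - (α:ℂ)) * (w-1)^k))
      (∮ w in C(0, R), w ^ (((k:ℕ)+1:ℤ) - z) * Complex.exp ((t:ℂ)*(w-1)) /
        ((w - (α:ℂ)) * (w-1)^(k+1))) := by
    simp only [circleIntegral, deriv_circleMap]
    apply intervalIntegral.hasSum_integral_of_dominated_convergence
      (bound := fun n (_ : ℝ) => R * (M * R⁻¹ ^ n))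
    · intro n
      exact (((continuous_circleMap 0 R).mul continuous_const).smul
        ((cont_aux α t R hα0 hα1 hR ((k:ℤ)-(z+n)) k).comp (by continuity : Continuous id)
          )).aestronglyMeasurable
    · intro n
      filter_upwards with θ _
      rw [norm_smul, norm_mul, Complex.norm_I, mul_one]
      have : ‖circleMap 0 R θ‖ = R := by
        simpa [abs_of_pos hR0] using norm_circleMap_zero R θ
      rw [this]
      exact mul_le_mul_of_nonneg_left
        (key n _ (circleMap_mem_sphere 0 hR0.le θ)) hR0.le
    · filter_upwards with θ _
      exact hgeo_sum.mul_left R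
    · exact intervalIntegrable_const
    · filter_upwards with θ _
      exact (pker_hasSum_aux α t R hα0 hα1 hR k z _
        (by rw [norm_circleMap_zero]; exact abs_of_pos hR0)).const_smul _
  constructor
  · -- summability of norms
    have hbound : ∀ n : ℕ, ‖pker α t R k (z + n)‖ ≤
        ‖(2 * (Real.pi:ℂ) * Complex.I)⁻¹‖ * (2 * Real.pi * R * (M * R⁻¹ ^ n)) := by
      intro n
      rw [pker, norm_mul]
      push_cast
      refine mul_le_mul_of_nonneg_left ?_ (norm_nonneg _)
      exact circleIntegral.norm_integral_le_of_norm_le_const hR0.le (key n)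
    exact Summable.of_nonneg_of_le (fun n => norm_nonneg _) hbound
      ((hgeo_sum.mul_left _).mul_left _)
  · -- the identity
    have := (hint.mul_left (2 * (Real.pi:ℂ) * Complex.I)⁻¹).tsum_eq
    simp only [pker]
    push_cast
    convert this using 2
end

section
/- Finite-sum recurrence for the contour kernel p: with p_k as above, for all integers s ≤ z and k ≥ 1, p_{k+1}(s) - p_{k+1}(z) = ∑_{y=s}^{z-1} p_k(y). -/
open Complex

lemma pker_integrable (α t R : ℝ) (hα0 : 0 < α) (hα1 : α < 1) (hR : 1 < R) (k : ℕ) (x : ℤ) :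
    CircleIntegrable (fun w : ℂ => w ^ ((k : ℤ) - x) * Complex.exp ((t : ℂ) * (w - 1)) /
      ((w - (α : ℂ)) * (w - 1) ^ k)) 0 R := by
  apply ContinuousOn.circleIntegrable (by linarith : (0:ℝ) ≤ R)
  intro w hw
  rw [Metric.mem_sphere, dist_zero_right] at hw
  have hw0 : w ≠ 0 := by
    intro h; rw [h] at hw; simp at hw; linarith
  have hw1 : w - 1 ≠ 0 := by
    intro h; rw [sub_eq_zero] at h; rw [h] at hw; simp at hw; linarith
  have hwα : w - (α : ℂ) ≠ 0 := by
    intro h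
    rw [sub_eq_zero] at h
    rw [h] at hw
    rw [Complex.norm_real, Real.norm_eq_abs, abs_of_pos hα0] at hw
    linarith
  apply ContinuousAt.continuousWithinAt
  apply ContinuousAt.div
  · exact ((continuousAt_zpow₀ _ _ (Or.inl hw0)).mul
      (Complex.continuous_exp.continuousAt.comp (by fun_prop)))
  · fun_prop
  · exact mul_ne_zero hwα (pow_ne_zero _ hw1)

lemma pker_step (α t R : ℝ) (hα0 : 0 < α) (hα1 : α < 1) (hR : 1 < R) (k : ℕ) (z : ℤ) :
    pker α t R (k + 1) z - pker α t R (k + 1) (z + 1) = pker α t R k z := by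
  unfold pker
  rw [← mul_sub,
    ← circleIntegral.integral_sub (pker_integrable α t R hα0 hα1 hR (k+1) z)
      (pker_integrable α t R hα0 hα1 hR (k+1) (z+1))]
  congr 1
  apply circleIntegral.integral_congr (by linarith : (0:ℝ) ≤ R)
  intro w hw
  rw [Metric.mem_sphere, dist_zero_right] at hw
  have hw0 : w ≠ 0 := by
    intro h; rw [h] at hw; simp at hw; linarith
  have hw1 : w - 1 ≠ 0 := by
    intro h; rw [sub_eq_zero] at h; rw [h] at hw; simp at hw; linarith
  have hwα : w - (α : ℂ) ≠ 0 := by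
    intro h
    rw [sub_eq_zero] at h
    rw [h] at hw
    rw [Complex.norm_real, Real.norm_eq_abs, abs_of_pos hα0] at hw
    linarith
  simp only [Pi.sub_apply]
  have e1 : ((k + 1 : ℕ) : ℤ) - z = ((k : ℤ) - z) + 1 := by push_cast; ring
  have e2 : ((k + 1 : ℕ) : ℤ) - (z + 1) = (k : ℤ) - z := by push_cast; ring
  rw [e1, e2, zpow_add₀ hw0 _ 1, zpow_one, pow_succ]
  field_simp

/-- finite-sum recurrence
`p_{k+1}(s) - p_{k+1}(z) = ∑_{y=s}^{z-1} p_k(y)` for all integers `s ≤ z`. -/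
theorem pker_finite_recurrence (α t R : ℝ) (hα0 : 0 < α) (hα1 : α < 1) (hR : 1 < R)
    (k : ℕ) (hk : 1 ≤ k) (s z : ℤ) (hsz : s ≤ z) :
    pker α t R (k + 1) s - pker α t R (k + 1) z = ∑ y ∈ Finset.Ico s z, pker α t R k y := by
  refine Int.le_induction (motive := fun z _ => pker α t R (k + 1) s - pker α t R (k + 1) z =
      ∑ y ∈ Finset.Ico s z, pker α t R k y) (by simp) ?_ z hsz
  intro z hz ih
  have hins : Finset.Ico s (z + 1) = insert z (Finset.Ico s z) := by
    ext x; simp only [Finset.mem_Ico, Finset.mem_insert]; omega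
  rw [hins, Finset.sum_insert (by simp), ← ih, ← pker_step α t R hα0 hα1 hR k z]
  ring
end
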